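/- Let D ∈ ℤ^{d×(t+1)} be a matrix whose t-th and (t+1)-th columns are equal, and let D' ∈ ℤ^{d×t} consist of the first t columns of D. If a multiset b_1, …, b_ℓ is a faithful decomposition of b ∈ ℤ^d with respect to D' of order Ξ, then it is also a faithful decomposition of b with respect to D of order Ξ. -/

import Mathlib

/-- `FaithfulDecomp D Ξ b L` : the multiset `L` of vectors in `ℤᵈ` is a faithful
decomposition of `b` with respect to the matrix `D` of order `Ξ`. -/
def FaithfulDecomp {d : ℕ} {ι : Type} [Fintype ι] (D : Matrix (Fin d) ι ℤ) (Ξ : ℤ)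
    (b : Fin d → ℤ) (L : Multiset (Fin d → ℤ)) : Prop :=
  L.sum = b ∧
  (∀ b' ∈ L, ∀ j, 0 ≤ b' j * b j ∧ |b' j| ≤ |b j|) ∧
  (∀ b' ∈ L, ∀ j, |b' j| ≤ Ξ) ∧
  ∀ x : ι → ℤ, (∀ i, 0 ≤ x i) → D.mulVec x = b →
    ∃ Mset : Multiset ((Fin d → ℤ) × (ι → ℤ)),
      Mset.map Prod.fst = L ∧ (Mset.map Prod.snd).sum = x ∧
      ∀ p ∈ Mset, (∀ i, 0 ≤ p.2 i) ∧ D.mulVec p.2 = p.1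

section Helpers

def liftVec (t : ℕ) (y : Fin t → ℤ) (u v : ℤ) : Fin (t + 1) → ℤ :=
  fun i => if h : (i : ℕ) < t then (if (i : ℕ) = t - 1 then u else y ⟨i, h⟩) else v

lemma liftVec_castSucc (t : ℕ) (y : Fin t → ℤ) (u v : ℤ) (i : Fin t) :
    liftVec t y u v i.castSucc = if (i : ℕ) = t - 1 then u else y i := by
  simp [liftVec, i.isLt]

lemma liftVec_last (t : ℕ) (y : Fin t → ℤ) (u v : ℤ) :
    liftVec t y u v (Fin.last t) = v := by
  simp [liftVec]

lemma liftVec_nonneg (t : ℕ) (y : Fin t → ℤ) (u v : ℤ)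
    (hy : ∀ i, 0 ≤ y i) (hu : 0 ≤ u) (hv : 0 ≤ v) (i : Fin (t + 1)) :
    0 ≤ liftVec t y u v i := by
  unfold liftVec
  split_ifs with h1 h2
  · exact hu
  · exact hy _
  · exact hv

variable {d t : ℕ}

lemma list_sum_apply {ι : Type*} (l : List (ι → ℤ)) (i : ι) :
    l.sum i = (l.map (fun f => f i)).sum := by
  induction l with
  | nil => rfl
  | cons a l ih => simp [ih]

lemma mulVec_liftVec (ht : 1 ≤ t) (D : Matrix (Fin d) (Fin (t + 1)) ℤ)
    (hdup : ∀ j, D j ⟨t - 1, Nat.lt_succ_of_le (Nat.sub_le t 1)⟩ = D j ⟨t, Nat.lt_succ_self t⟩)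
    (D' : Matrix (Fin d) (Fin t) ℤ)
    (hcols : ∀ j (i : Fin t), D' j i = D j i.castSucc)
    (c : Fin t) (hcv : (c : ℕ) = t - 1)
    (y : Fin t → ℤ) (u v : ℤ) (huv : u + v = y c) :
    D.mulVec (liftVec t y u v) = D'.mulVec y := by
  funext j
  have hcc : c.castSucc = (⟨t - 1, Nat.lt_succ_of_le (Nat.sub_le t 1)⟩ : Fin (t + 1)) := by ext; simp [hcv]
  have hlast : D j (Fin.last t) = D j c.castSucc := by
    rw [hcc, hdup j]; rfl
  simp only [Matrix.mulVec, dotProduct, Fin.sum_univ_castSucc, liftVec_last]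
  have key : ∀ i : Fin t, D j i.castSucc * liftVec t y u v i.castSucc
      = D j i.castSucc * y i + (if i = c then D j c.castSucc * (u - y c) else 0) := by
    intro i
    rw [liftVec_castSucc]
    by_cases h : i = c
    · subst h; rw [if_pos hcv, if_pos rfl]; ring
    · rw [if_neg (fun hh => h (Fin.ext (hh.trans hcv.symm))), if_neg h]; ring
  rw [Finset.sum_congr rfl (fun i _ => key i), Finset.sum_add_distrib,
    Finset.sum_ite_eq' Finset.univ c]
  simp only [Finset.mem_univ, if_true, hlast, hcols]
  linear_combination (D j c.castSucc) * huv

def projVec (t : ℕ) (x : Fin (t + 1) → ℤ) : Fin t → ℤ :=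
  fun i => if (i : ℕ) = t - 1 then x i.castSucc + x (Fin.last t) else x i.castSucc

lemma mulVec_projVec (ht : 1 ≤ t) (D : Matrix (Fin d) (Fin (t + 1)) ℤ)
    (hdup : ∀ j, D j ⟨t - 1, Nat.lt_succ_of_le (Nat.sub_le t 1)⟩ = D j ⟨t, Nat.lt_succ_self t⟩)
    (D' : Matrix (Fin d) (Fin t) ℤ)
    (hcols : ∀ j (i : Fin t), D' j i = D j i.castSucc)
    (c : Fin t) (hcv : (c : ℕ) = t - 1)
    (x : Fin (t + 1) → ℤ) :
    D'.mulVec (projVec t x) = D.mulVec x := by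
  funext j
  have hcc : c.castSucc = (⟨t - 1, Nat.lt_succ_of_le (Nat.sub_le t 1)⟩ : Fin (t + 1)) := by ext; simp [hcv]
  have hlast : D j (Fin.last t) = D j c.castSucc := by
    rw [hcc, hdup j]; rfl
  simp only [Matrix.mulVec, dotProduct, Fin.sum_univ_castSucc]
  have key : ∀ i : Fin t, D' j i * projVec t x i
      = D j i.castSucc * x i.castSucc + (if i = c then D j c.castSucc * x (Fin.last t) else 0) := by
    intro i
    rw [hcols]
    unfold projVec
    by_cases h : i = c
    · subst h; rw [if_pos hcv, if_pos rfl]; ring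
    · rw [if_neg (fun hh => h (Fin.ext (hh.trans hcv.symm))), if_neg h]; ring
  rw [Finset.sum_congr rfl (fun i _ => key i), Finset.sum_add_distrib,
    Finset.sum_ite_eq' Finset.univ c]
  simp only [Finset.mem_univ, if_true, hlast]

lemma split_list (ht : 1 ≤ t) (D : Matrix (Fin d) (Fin (t + 1)) ℤ)
    (hdup : ∀ j, D j ⟨t - 1, Nat.lt_succ_of_le (Nat.sub_le t 1)⟩ = D j ⟨t, Nat.lt_succ_self t⟩)
    (D' : Matrix (Fin d) (Fin t) ℤ)
    (hcols : ∀ j (i : Fin t), D' j i = D j i.castSucc)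
    (c : Fin t) (hcv : (c : ℕ) = t - 1)
    (l : List ((Fin d → ℤ) × (Fin t → ℤ)))
    (hl : ∀ r ∈ l, (∀ i, 0 ≤ r.2 i) ∧ D'.mulVec r.2 = r.1) :
    ∀ p q : ℤ, 0 ≤ p → 0 ≤ q →
      (l.map (fun r => r.2 c)).sum = p + q →
      ∃ m : List ((Fin d → ℤ) × (Fin (t + 1) → ℤ)),
        m.map Prod.fst = l.map Prod.fst ∧
        (m.map Prod.snd).sum = liftVec t (l.map Prod.snd).sum p q ∧
        ∀ r ∈ m, (∀ i, 0 ≤ r.2 i) ∧ D.mulVec r.2 = r.1 := by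
  induction l with
  | nil =>
    intro p q hp hq hsum
    simp only [List.map_nil, List.sum_nil] at hsum
    have hp0 : p = 0 := by omega
    have hq0 : q = 0 := by omega
    subst hp0; subst hq0
    refine ⟨[], by simp, ?_, by simp⟩
    funext i
    simp only [List.map_nil, List.sum_nil, liftVec]
    split_ifs <;> rfl
  | cons r l ih =>
    intro p q hp hq hsum
    rw [List.map_cons, List.sum_cons] at hsum
    have hr := hl r (List.mem_cons_self)
    have hrest : ∀ s ∈ l, (∀ i, 0 ≤ s.2 i) ∧ D'.mulVec s.2 = s.1 :=
      fun s hs => hl s (List.mem_cons_of_mem _ hs)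
    have ha0 : 0 ≤ r.2 c := hr.1 c
    have hS0 : 0 ≤ (List.map (fun r => r.2 c) l).sum := by
      apply List.sum_nonneg
      intro z hz
      rw [List.mem_map] at hz
      obtain ⟨s, hs, hz⟩ := hz
      rw [← hz]
      exact (hrest s hs).1 c
    obtain ⟨m, hm1, hm2, hm3⟩ := ih hrest (p - min (r.2 c) p) (q - (r.2 c - min (r.2 c) p))
      (by omega) (by omega) (by omega)
    refine ⟨(r.1, liftVec t r.2 (min (r.2 c) p) (r.2 c - min (r.2 c) p)) :: m,
      by simp [hm1], ?_, ?_⟩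
    · rw [List.map_cons, List.sum_cons, hm2, List.map_cons, List.sum_cons]
      funext i
      simp only [Pi.add_apply, liftVec]
      split_ifs with h1 h2
      · omega
      · rfl
      · omega
    · intro s hs
      rcases List.mem_cons.mp hs with h | h
      · subst h
        refine ⟨liftVec_nonneg _ _ _ _ hr.1 (by omega) (by omega), ?_⟩
        rw [mulVec_liftVec ht D hdup D' hcols c hcv r.2 _ _ (by omega)]
        exact hr.2
      · exact hm3 s h

end Helpers

/-- Let `D ∈ ℤ^{d×(t+1)}` have equal `t`-th and `(t+1)`-th columns (one-based; in
zero-based indexing these are the columns `t - 1` and `t`), and let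
`D' ∈ ℤ^{d×t}` consist of the first `t` columns of `D`.  Then every faithful
decomposition of `b` with respect to `D'` of order `Ξ` is also a faithful
decomposition of `b` with respect to `D` of order `Ξ`. -/
theorem faithful_decomposition_remove_duplicate_column
    (d t : ℕ) (ht : 1 ≤ t) (D : Matrix (Fin d) (Fin (t + 1)) ℤ)
    (hdup : ∀ j, D j ⟨t - 1, by omega⟩ = D j ⟨t, by omega⟩)
    (D' : Matrix (Fin d) (Fin t) ℤ)
    (hcols : ∀ j (i : Fin t), D' j i = D j i.castSucc)
    (Ξ : ℤ) (b : Fin d → ℤ) (L : Multiset (Fin d → ℤ))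
    (hL : FaithfulDecomp D' Ξ b L) :
    FaithfulDecomp D Ξ b L := by
  obtain ⟨hsum, hconf, hbound, hdecomp⟩ := hL
  refine ⟨hsum, hconf, hbound, ?_⟩
  intro x hx hDx
  have hxpn : ∀ i, 0 ≤ projVec t x i := by
    intro i
    unfold projVec
    split_ifs
    · exact add_nonneg (hx _) (hx _)
    · exact hx _
  obtain ⟨Mset', hM1, hM2, hM3⟩ := hdecomp (projVec t x) hxpn
    (by rw [mulVec_projVec ht D hdup D' hcols ⟨t - 1, by omega⟩ rfl, hDx])
  obtain ⟨l, rfl⟩ : ∃ l : List _, (l : Multiset _) = Mset' := ⟨Mset'.toList, Multiset.coe_toList _⟩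
  have hlprop : ∀ r ∈ l, (∀ i, 0 ≤ r.2 i) ∧ D'.mulVec r.2 = r.1 :=
    fun r hr => hM3 r (by simpa using hr)
  have hsumapply : ∀ i : Fin t, (l.map Prod.snd).sum i = projVec t x i := by
    intro i
    have h2 := hM2
    rw [Multiset.map_coe, Multiset.sum_coe] at h2
    rw [h2]
  have hpq : (l.map (fun r => r.2 (⟨t - 1, by omega⟩ : Fin t))).sum
      = x ((⟨t - 1, by omega⟩ : Fin t).castSucc) + x (Fin.last t) := by
    have h3 : (l.map (fun r => r.2 (⟨t - 1, by omega⟩ : Fin t))).sum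
        = (l.map Prod.snd).sum ⟨t - 1, by omega⟩ := by
      rw [list_sum_apply, List.map_map]; rfl
    rw [h3, hsumapply]
    unfold projVec
    rw [if_pos rfl]
  obtain ⟨m, hm1, hm2, hm3⟩ := split_list ht D hdup D' hcols ⟨t - 1, by omega⟩ rfl l hlprop
    (x ((⟨t - 1, by omega⟩ : Fin t).castSucc)) (x (Fin.last t)) (hx _) (hx _) hpq
  refine ⟨(m : Multiset _), ?_, ?_, fun p hp => hm3 p (by simpa using hp)⟩
  · rw [Multiset.map_coe, hm1, ← Multiset.map_coe]
    exact hM1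
  · rw [Multiset.map_coe, Multiset.sum_coe, hm2]
    funext i
    unfold liftVec
    split_ifs with h1 h2
    · refine congrArg x (Fin.ext ?_)
      simp only [Fin.coe_castSucc]
      omega
    · rw [hsumapply ⟨(i : ℕ), h1⟩]
      unfold projVec
      rw [if_neg h2]
      exact congrArg x (Fin.ext rfl)
    · have hi := i.isLt
      refine congrArg x (Fin.ext ?_)
      rw [Fin.val_last]
      omega
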